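/- arXiv:1704.04781 — 11 statements merged into one kernel-verified Lean document; each statement's English description precedes it below -/
import Mathlib

section
/- Let (A, ↖, ↗, ↙, ↘) be a quadri-algebra. Then the operations x ≻ y := x ↗ y + x ↘ y and x ≺ y := x ↖ y + x ↙ y make (A, ≺, ≻) into a dendriform dialgebra (the associated horizontal dendriform dialgebra). -/
/-- The dendriform dialgebra axioms for a pair of binary operations. -/
def DendriformEqs {A : Type*} [Add A] (p s : A → A → A) : Prop :=
  ∀ x y z : A,
    p (p x y) z = p x (p y z + s y z) ∧
    p (s x y) z = s x (p y z) ∧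
    s (p x y + s x y) z = s x (s y z)

/-- The nine quadri-algebra axioms for four binary operations
`nw = ↖`, `ne = ↗`, `sw = ↙`, `se = ↘`. -/
def QuadriEqs {A : Type*} [Add A] (nw ne sw se : A → A → A) : Prop :=
  ∀ x y z : A,
    nw (nw x y) z = nw x (nw y z + ne y z + sw y z + se y z) ∧
    nw (ne x y) z = ne x (nw y z + sw y z) ∧
    ne (nw x y + ne x y) z = ne x (ne y z + se y z) ∧
    nw (sw x y) z = sw x (nw y z + ne y z) ∧
    nw (se x y) z = se x (nw y z) ∧
    ne (sw x y + se x y) z = se x (ne y z) ∧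
    sw (nw x y + sw x y) z = sw x (sw y z + se y z) ∧
    sw (ne x y + se x y) z = se x (sw y z) ∧
    se (nw x y + ne x y + sw x y + se x y) z = se x (se y z)

/-- the associated horizontal dendriform dialgebra
`x ≺ y = x↖y + x↙y`, `x ≻ y = x↗y + x↘y` of a quadri-algebra. -/
theorem quadri_horizontal_dendriform {F A : Type*} [Field F] [AddCommGroup A] [Module F A]
    (nw ne sw se : A →ₗ[F] A →ₗ[F] A)
    (h : QuadriEqs (fun x y => nw x y) (fun x y => ne x y)
      (fun x y => sw x y) (fun x y => se x y)) :
    DendriformEqs (fun x y => nw x y + sw x y) (fun x y => ne x y + se x y) := by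
  intro x y z
  obtain ⟨e1, e2, e3, e4, e5, e6, e7, e8, e9⟩ := h x y z
  simp only [map_add, LinearMap.add_apply] at *
  refine ⟨?_, ?_, ?_⟩
  · linear_combination (norm := abel) e1 + e4 + e7
  · linear_combination (norm := abel) e2 + e5 + e8
  · linear_combination (norm := abel) e3 + e6 + e9
end

section
/- Let (A, ↖, ↗, ↙, ↘) be a quadri-algebra. Then the operations x ∧ y := x ↖ y + x ↗ y and x ∨ y := x ↙ y + x ↘ y make (A, ∧, ∨) into a dendriform dialgebra (the associated vertical dendriform dialgebra), where ∧ plays the role of ≺ and ∨ the role of ≻. -/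
/-- the associated vertical dendriform dialgebra
`x ∧ y = x↖y + x↗y` (playing the role of ≺), `x ∨ y = x↙y + x↘y`
(playing the role of ≻) of a quadri-algebra. -/
theorem quadri_vertical_dendriform {F A : Type*} [Field F] [AddCommGroup A] [Module F A]
    (nw ne sw se : A →ₗ[F] A →ₗ[F] A)
    (h : QuadriEqs (fun x y => nw x y) (fun x y => ne x y)
      (fun x y => sw x y) (fun x y => se x y)) :
    DendriformEqs (fun x y => nw x y + ne x y) (fun x y => sw x y + se x y) := by
  intro x y z
  obtain ⟨h1, h2, h3, h4, h5, h6, h7, h8, h9⟩ := h x y z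
  simp only [map_add, LinearMap.add_apply] at *
  refine ⟨?_, ?_, ?_⟩
  · rw [h1, h2, h3]; abel
  · rw [h4, h5, h6]; abel
  · rw [← h7, ← h8, ← h9]; abel
end

section
/- Let (V, l_≺, r_≺, l_≻, r_≻) be a bimodule of a dendriform dialgebra (A, ≺, ≻), where V is finite-dimensional. Then (V*, −r_≻*, l_≻* + l_≺*, r_≻* + r_≺*, −l_≺*) is a bimodule of (A, ≺, ≻), where for a linear map ρ : A → gl(V), the map ρ* : A → gl(V*) is defined by ⟨ρ*(x)v*, u⟩ = ⟨v*, ρ(x)u⟩ for x ∈ A, u ∈ V, v* ∈ V*. -/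
/-- The bimodule axioms for a dendriform dialgebra `(A, p, s)` acting on `V`
via `l_≺ = lp`, `r_≺ = rp`, `l_≻ = ls`, `r_≻ = rs`. -/
def DendBimoduleEqs {F A V : Type*} [Field F] [AddCommGroup A] [Module F A]
    [AddCommGroup V] [Module F V]
    (p s : A → A → A) (lp rp ls rs : A → Module.End F V) : Prop :=
  ∀ x y : A,
    rp y * rp x = rp (p x y + s x y) ∧
    rp y * lp x = lp x * (rp y + rs y) ∧
    lp (p x y) = lp x * (lp y + ls y) ∧
    rp y * rs x = rs (p x y) ∧
    rp y * ls x = ls x * rp y ∧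
    lp (s x y) = ls x * lp y ∧
    rs y * (rp x + rs x) = rs (s x y) ∧
    rs y * (lp x + ls x) = ls x * rs y ∧
    ls (p x y + s x y) = ls x * ls y



/-- the dual bimodule `(V*, −r_≻*, l_≻*+l_≺*, r_≻*+r_≺*, −l_≺*)`
of a bimodule `(V, l_≺, r_≺, l_≻, r_≻)` over a dendriform dialgebra. -/
theorem dendriform_dual_bimodule {F A V : Type*} [Field F] [AddCommGroup A] [Module F A]
    [AddCommGroup V] [Module F V] [FiniteDimensional F V]
    (p s : A →ₗ[F] A →ₗ[F] A)
    (hd : DendriformEqs (fun x y => p x y) (fun x y => s x y))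
    (lp rp ls rs : A →ₗ[F] Module.End F V)
    (hbim : DendBimoduleEqs (fun x y => p x y) (fun x y => s x y)
      (fun x => lp x) (fun x => rp x) (fun x => ls x) (fun x => rs x)) :
    DendBimoduleEqs (V := Module.Dual F V) (fun x y => p x y) (fun x y => s x y)
      (fun x => -((rs x).dualMap))
      (fun x => (ls x).dualMap + (lp x).dualMap)
      (fun x => (rs x).dualMap + (rp x).dualMap)
      (fun x => -((lp x).dualMap)) := by
  intro x y
  obtain ⟨a1, a2, a3, a4, a5, a6, a7, a8, a9⟩ := hbim x y
  obtain ⟨b1, b2, b3, b4, b5, b6, b7, b8, b9⟩ := hbim y x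
  have sc : ∀ {T1 T2 : Module.End F V}, T1 = T2 → ∀ (φ : Module.Dual F V) (v : V),
      φ (T1 v) = φ (T2 v) := by rintro T1 T2 rfl φ v; rfl
  refine ⟨?_, ?_, ?_, ?_, ?_, ?_, ?_, ?_, ?_⟩ <;> ext φ v <;>
    simp only [Module.End.mul_apply, LinearMap.add_apply, LinearMap.neg_apply,
      LinearMap.dualMap_apply, map_add, map_neg]
  · have h3 := sc a3 φ v
    have h6 := sc a6 φ v
    have h9 := sc a9 φ v
    simp only [Module.End.mul_apply, LinearMap.add_apply, map_add] at h3 h6 h9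
    linear_combination -h3 - h6 - h9
  · have h8 := sc b8 φ v
    simp only [Module.End.mul_apply, LinearMap.add_apply, map_add] at h8
    linear_combination -h8
  · have h4 := sc a4 φ v
    simp only [Module.End.mul_apply] at h4
    linear_combination h4
  · have h3 := sc a3 φ v
    simp only [Module.End.mul_apply, LinearMap.add_apply, map_add] at h3
    linear_combination h3
  · have h8 := sc b8 φ v
    have h5 := sc b5 φ v
    have h2 := sc b2 φ v
    simp only [Module.End.mul_apply, LinearMap.add_apply, map_add] at h8 h5 h2
    linear_combination h8 + h5 + h2
  · have h7 := sc a7 φ v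
    simp only [Module.End.mul_apply, LinearMap.add_apply, map_add] at h7
    linear_combination h7
  · have h6 := sc a6 φ v
    simp only [Module.End.mul_apply] at h6
    linear_combination h6
  · have h2 := sc b2 φ v
    simp only [Module.End.mul_apply, LinearMap.add_apply, map_add] at h2
    linear_combination -h2
  · have h1 := sc a1 φ v
    have h4 := sc a4 φ v
    have h7 := sc a7 φ v
    simp only [Module.End.mul_apply, LinearMap.add_apply, map_add] at h1 h4 h7
    linear_combination -h1 - h4 - h7
end

section
/- Let A be a vector space with four bilinear operations ↖, ↗, ↙, ↘. Then (A, ↖, ↗, ↙, ↘) is a quadri-algebra if and only if (A, ≺, ≻) with x≺y := x↖y + x↙y and x≻y := x↗y + x↘y is a dendriform dialgebra and (A, L_↙, R_↖, L_↘, R_↗) is a bimodule of this dendriform dialgebra, where L_∘(x)y = x∘y and R_∘(x)y = y∘x denote left and right multiplication operators. -/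
/-- `(A,↖,↗,↙,↘)` is a quadri-algebra iff `(A,≺,≻)` with
`≺ = ↖+↙`, `≻ = ↗+↘` is a dendriform dialgebra and
`(A, L_↙, R_↖, L_↘, R_↗)` is a bimodule of it. -/
theorem quadri_iff_horizontal_dendriform_bimodule {F A : Type*} [Field F]
    [AddCommGroup A] [Module F A]
    (nw ne sw se : A →ₗ[F] A →ₗ[F] A) :
    QuadriEqs (fun x y => nw x y) (fun x y => ne x y)
        (fun x y => sw x y) (fun x y => se x y) ↔
      (DendriformEqs (fun x y => nw x y + sw x y) (fun x y => ne x y + se x y) ∧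
        DendBimoduleEqs (V := A)
          (fun x y => nw x y + sw x y) (fun x y => ne x y + se x y)
          (fun x => sw x) (fun x => nw.flip x) (fun x => se x) (fun x => ne.flip x)) := by
  constructor
  · intro h
    constructor
    · intro x y z
      obtain ⟨q1,q2,q3,q4,q5,q6,q7,q8,q9⟩ := h x y z
      refine ⟨?_, ?_, ?_⟩
      · have E := congrArg₂ (· + ·) (congrArg₂ (· + ·) q1 q4) q7
        simp only [map_add, LinearMap.add_apply] at E ⊢
        rw [← sub_eq_zero] at E ⊢; rw [← E] <;> abel
      · have E := congrArg₂ (· + ·) (congrArg₂ (· + ·) q2 q5) q8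
        simp only [map_add, LinearMap.add_apply] at E ⊢
        rw [← sub_eq_zero] at E ⊢; rw [← E] <;> abel
      · have E := congrArg₂ (· + ·) (congrArg₂ (· + ·) q3 q6) q9
        simp only [map_add, LinearMap.add_apply] at E ⊢
        rw [← sub_eq_zero] at E ⊢; rw [← E] <;> abel
    · intro x y
      refine ⟨?_, ?_, ?_, ?_, ?_, ?_, ?_, ?_, ?_⟩
      · refine LinearMap.ext fun z => ?_
        have q := (h z x y).1
        simp only [Module.End.mul_apply, LinearMap.add_apply, LinearMap.flip_apply, map_add] at q ⊢
        rw [← sub_eq_zero] at q ⊢; rw [← q] <;> abel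
      · refine LinearMap.ext fun z => ?_
        have q := (h x z y).2.2.2.1
        simp only [Module.End.mul_apply, LinearMap.add_apply, LinearMap.flip_apply, map_add] at q ⊢
        rw [← sub_eq_zero] at q ⊢; rw [← q] <;> abel
      · refine LinearMap.ext fun z => ?_
        have q := (h x y z).2.2.2.2.2.2.1
        simp only [Module.End.mul_apply, LinearMap.add_apply, LinearMap.flip_apply, map_add] at q ⊢
        rw [← sub_eq_zero] at q ⊢; rw [← q] <;> abel
      · refine LinearMap.ext fun z => ?_
        have q := (h z x y).2.1
        simp only [Module.End.mul_apply, LinearMap.add_apply, LinearMap.flip_apply, map_add] at q ⊢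
        rw [← sub_eq_zero] at q ⊢; rw [← q] <;> abel
      · refine LinearMap.ext fun z => ?_
        have q := (h x z y).2.2.2.2.1
        simp only [Module.End.mul_apply, LinearMap.add_apply, LinearMap.flip_apply, map_add] at q ⊢
        rw [← sub_eq_zero] at q ⊢; rw [← q] <;> abel
      · refine LinearMap.ext fun z => ?_
        have q := (h x y z).2.2.2.2.2.2.2.1
        simp only [Module.End.mul_apply, LinearMap.add_apply, LinearMap.flip_apply, map_add] at q ⊢
        rw [← sub_eq_zero] at q ⊢; rw [← q] <;> abel
      · refine LinearMap.ext fun z => ?_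
        have q := (h z x y).2.2.1
        simp only [Module.End.mul_apply, LinearMap.add_apply, LinearMap.flip_apply, map_add] at q ⊢
        rw [← sub_eq_zero] at q ⊢; rw [← q] <;> abel
      · refine LinearMap.ext fun z => ?_
        have q := (h x z y).2.2.2.2.2.1
        simp only [Module.End.mul_apply, LinearMap.add_apply, LinearMap.flip_apply, map_add] at q ⊢
        rw [← sub_eq_zero] at q ⊢; rw [← q] <;> abel
      · refine LinearMap.ext fun z => ?_
        have q := (h x y z).2.2.2.2.2.2.2.2
        simp only [Module.End.mul_apply, LinearMap.add_apply, LinearMap.flip_apply, map_add] at q ⊢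
        rw [← sub_eq_zero] at q ⊢; rw [← q] <;> abel
  · rintro ⟨-, hb⟩
    intro x y z
    refine ⟨?_, ?_, ?_, ?_, ?_, ?_, ?_, ?_, ?_⟩
    · have q := DFunLike.congr_fun ((hb y z).1) x
      simp only [Module.End.mul_apply, LinearMap.add_apply, LinearMap.flip_apply, map_add] at q ⊢
      rw [← sub_eq_zero] at q ⊢; rw [← q] <;> abel
    · have q := DFunLike.congr_fun ((hb y z).2.2.2.1) x
      simp only [Module.End.mul_apply, LinearMap.add_apply, LinearMap.flip_apply, map_add] at q ⊢
      rw [← sub_eq_zero] at q ⊢; rw [← q] <;> abel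
    · have q := DFunLike.congr_fun ((hb y z).2.2.2.2.2.2.1) x
      simp only [Module.End.mul_apply, LinearMap.add_apply, LinearMap.flip_apply, map_add] at q ⊢
      rw [← sub_eq_zero] at q ⊢; rw [← q] <;> abel
    · have q := DFunLike.congr_fun ((hb x z).2.1) y
      simp only [Module.End.mul_apply, LinearMap.add_apply, LinearMap.flip_apply, map_add] at q ⊢
      rw [← sub_eq_zero] at q ⊢; rw [← q] <;> abel
    · have q := DFunLike.congr_fun ((hb x z).2.2.2.2.1) y
      simp only [Module.End.mul_apply, LinearMap.add_apply, LinearMap.flip_apply, map_add] at q ⊢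
      rw [← sub_eq_zero] at q ⊢; rw [← q] <;> abel
    · have q := DFunLike.congr_fun ((hb x z).2.2.2.2.2.2.2.1) y
      simp only [Module.End.mul_apply, LinearMap.add_apply, LinearMap.flip_apply, map_add] at q ⊢
      rw [← sub_eq_zero] at q ⊢; rw [← q] <;> abel
    · have q := DFunLike.congr_fun ((hb x y).2.2.1) z
      simp only [Module.End.mul_apply, LinearMap.add_apply, LinearMap.flip_apply, map_add] at q ⊢
      rw [← sub_eq_zero] at q ⊢; rw [← q] <;> abel
    · have q := DFunLike.congr_fun ((hb x y).2.2.2.2.2.1) z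
      simp only [Module.End.mul_apply, LinearMap.add_apply, LinearMap.flip_apply, map_add] at q ⊢
      rw [← sub_eq_zero] at q ⊢; rw [← q] <;> abel
    · have q := DFunLike.congr_fun ((hb x y).2.2.2.2.2.2.2.2) z
      simp only [Module.End.mul_apply, LinearMap.add_apply, LinearMap.flip_apply, map_add] at q ⊢
      rw [← sub_eq_zero] at q ⊢; rw [← q] <;> abel
end

section
/- Let A be a vector space with four bilinear operations ↖, ↗, ↙, ↘. Then (A, ↖, ↗, ↙, ↘) is a quadri-algebra if and only if (A, ∧, ∨) with x∧y := x↖y + x↗y and x∨y := x↙y + x↘y is a dendriform dialgebra (with ∧ as ≺ and ∨ as ≻) and (A, L_↗, R_↖, L_↘, R_↙) is a bimodule of this dendriform dialgebra. -/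
/-- `(A,↖,↗,↙,↘)` is a quadri-algebra iff `(A,∧,∨)` with
`∧ = ↖+↗` (as ≺), `∨ = ↙+↘` (as ≻) is a dendriform dialgebra and
`(A, L_↗, R_↖, L_↘, R_↙)` is a bimodule of it. -/
theorem quadri_iff_vertical_dendriform_bimodule {F A : Type*} [Field F]
    [AddCommGroup A] [Module F A]
    (nw ne sw se : A →ₗ[F] A →ₗ[F] A) :
    QuadriEqs (fun x y => nw x y) (fun x y => ne x y)
        (fun x y => sw x y) (fun x y => se x y) ↔
      (DendriformEqs (fun x y => nw x y + ne x y) (fun x y => sw x y + se x y) ∧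
        DendBimoduleEqs (V := A)
          (fun x y => nw x y + ne x y) (fun x y => sw x y + se x y)
          (fun x => ne x) (fun x => nw.flip x) (fun x => se x) (fun x => sw.flip x)) := by
  constructor
  · intro h
    constructor
    · intro x y z
      obtain ⟨h1, h2, h3, h4, h5, h6, h7, h8, h9⟩ := h x y z
      simp only [map_add, LinearMap.add_apply] at h1 h2 h3 h4 h5 h6 h7 h8 h9 ⊢
      refine ⟨?_, ?_, ?_⟩
      · linear_combination (norm := abel) h1 + h2 + h3
      · linear_combination (norm := abel) h4 + h5 + h6
      · linear_combination (norm := abel) h7 + h8 + h9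
    · intro x y
      refine ⟨?_, ?_, ?_, ?_, ?_, ?_, ?_, ?_, ?_⟩ <;>
        ext v <;>
        simp only [Module.End.mul_apply, LinearMap.add_apply, LinearMap.flip_apply, map_add]
      · have h1 := (h v x y).1
        simp only [map_add, LinearMap.add_apply] at h1 ⊢
        linear_combination (norm := abel) h1
      · have h2 := (h x v y).2.1
        simp only [map_add, LinearMap.add_apply] at h2 ⊢
        linear_combination (norm := abel) h2
      · have h3 := (h x y v).2.2.1
        simp only [map_add, LinearMap.add_apply] at h3 ⊢
        linear_combination (norm := abel) h3
      · have h4 := (h v x y).2.2.2.1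
        simp only [map_add, LinearMap.add_apply] at h4 ⊢
        linear_combination (norm := abel) h4
      · have h5 := (h x v y).2.2.2.2.1
        simp only [map_add, LinearMap.add_apply] at h5 ⊢
        linear_combination (norm := abel) h5
      · have h6 := (h x y v).2.2.2.2.2.1
        simp only [map_add, LinearMap.add_apply] at h6 ⊢
        linear_combination (norm := abel) h6
      · have h7 := (h v x y).2.2.2.2.2.2.1
        simp only [map_add, LinearMap.add_apply] at h7 ⊢
        linear_combination (norm := abel) h7
      · have h8 := (h x v y).2.2.2.2.2.2.2.1
        simp only [map_add, LinearMap.add_apply] at h8 ⊢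
        linear_combination (norm := abel) h8
      · have h9 := (h x y v).2.2.2.2.2.2.2.2
        simp only [map_add, LinearMap.add_apply] at h9 ⊢
        linear_combination (norm := abel) h9
  · rintro ⟨-, hb⟩
    intro x y z
    refine ⟨?_, ?_, ?_, ?_, ?_, ?_, ?_, ?_, ?_⟩
    · have h1 := DFunLike.congr_fun (hb y z).1 x
      simp only [Module.End.mul_apply, LinearMap.add_apply, LinearMap.flip_apply,
        map_add] at h1 ⊢
      linear_combination (norm := abel) h1
    · have h2 := DFunLike.congr_fun (hb x z).2.1 y
      simp only [Module.End.mul_apply, LinearMap.add_apply, LinearMap.flip_apply,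
        map_add] at h2 ⊢
      linear_combination (norm := abel) h2
    · have h3 := DFunLike.congr_fun (hb x y).2.2.1 z
      simp only [Module.End.mul_apply, LinearMap.add_apply, LinearMap.flip_apply,
        map_add] at h3 ⊢
      linear_combination (norm := abel) h3
    · have h4 := DFunLike.congr_fun (hb y z).2.2.2.1 x
      simp only [Module.End.mul_apply, LinearMap.add_apply, LinearMap.flip_apply,
        map_add] at h4 ⊢
      linear_combination (norm := abel) h4
    · have h5 := DFunLike.congr_fun (hb x z).2.2.2.2.1 y
      simp only [Module.End.mul_apply, LinearMap.add_apply, LinearMap.flip_apply,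
        map_add] at h5 ⊢
      linear_combination (norm := abel) h5
    · have h6 := DFunLike.congr_fun (hb x y).2.2.2.2.2.1 z
      simp only [Module.End.mul_apply, LinearMap.add_apply, LinearMap.flip_apply,
        map_add] at h6 ⊢
      linear_combination (norm := abel) h6
    · have h7 := DFunLike.congr_fun (hb y z).2.2.2.2.2.2.1 x
      simp only [Module.End.mul_apply, LinearMap.add_apply, LinearMap.flip_apply,
        map_add] at h7 ⊢
      linear_combination (norm := abel) h7
    · have h8 := DFunLike.congr_fun (hb x z).2.2.2.2.2.2.2.1 y
      simp only [Module.End.mul_apply, LinearMap.add_apply, LinearMap.flip_apply,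
        map_add] at h8 ⊢
      linear_combination (norm := abel) h8
    · have h9 := DFunLike.congr_fun (hb x y).2.2.2.2.2.2.2.2 z
      simp only [Module.End.mul_apply, LinearMap.add_apply, LinearMap.flip_apply,
        map_add] at h9 ⊢
      linear_combination (norm := abel) h9
end

section
/- Let (A, ∧, ∨) be a finite-dimensional dendriform dialgebra equipped with a nondegenerate 2-cocycle 𝔅, i.e., a nondegenerate symmetric bilinear form satisfying 𝔅(x⋆y, z) = 𝔅(y, z∧x) + 𝔅(x, y∨z) for all x, y, z, where x⋆y = x∧y + x∨y. Define four bilinear operations by 𝔅(x↖y, z) = 𝔅(x, y⋆z), 𝔅(x↗y, z) = −𝔅(y, z∨x), 𝔅(x↙y, z) = −𝔅(x, y∧z), 𝔅(x↘y, z) = 𝔅(y, z⋆x). Then (A, ↖, ↗, ↙, ↘) is a quadri-algebra whose associated vertical dendriform dialgebra is (A, ∧, ∨), i.e., x∧y = x↖y + x↗y and x∨y = x↙y + x↘y. -/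
/-- a dendriform dialgebra `(A,∧,∨)` with a nondegenerate
2-cocycle `𝔅` induces a quadri-algebra whose associated vertical dendriform
dialgebra is `(A,∧,∨)`, where the four operations are defined by
`𝔅(x↖y,z)=𝔅(x,y⋆z)`, `𝔅(x↗y,z)=−𝔅(y,z∨x)`, `𝔅(x↙y,z)=−𝔅(x,y∧z)`,
`𝔅(x↘y,z)=𝔅(y,z⋆x)`. -/
theorem dendriform_cocycle_quadri {F A : Type*} [Field F] [AddCommGroup A] [Module F A]
    [FiniteDimensional F A]
    (w v : A →ₗ[F] A →ₗ[F] A)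
    (hd : DendriformEqs (fun x y => w x y) (fun x y => v x y))
    (B : A →ₗ[F] A →ₗ[F] F)
    (hsym : ∀ x y : A, B x y = B y x)
    (hnd : ∀ x : A, (∀ y : A, B x y = 0) → x = 0)
    (hcoc : ∀ x y z : A, B (w x y + v x y) z = B y (w z x) + B x (v y z))
    (nw ne sw se : A →ₗ[F] A →ₗ[F] A)
    (hnw : ∀ x y z : A, B (nw x y) z = B x (w y z + v y z))
    (hne : ∀ x y z : A, B (ne x y) z = -B y (v z x))
    (hsw : ∀ x y z : A, B (sw x y) z = -B x (w y z))
    (hse : ∀ x y z : A, B (se x y) z = B y (w z x + v z x)) :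
    QuadriEqs (fun x y => nw x y) (fun x y => ne x y)
        (fun x y => sw x y) (fun x y => se x y) ∧
      (∀ x y : A, w x y = nw x y + ne x y ∧ v x y = sw x y + se x y) := by
  have ext0 : ∀ a b : A, (∀ t : A, B a t = B b t) → a = b := by
    intro a b h
    have h2 : ∀ t, B (a - b) t = 0 := by
      intro t
      rw [map_sub, LinearMap.sub_apply, h t, sub_self]
    exact sub_eq_zero.mp (hnd _ h2)
  have D1 : ∀ a b c : A, w (w a b) c = w a (w b c + v b c) := fun a b c => (hd a b c).1
  have D2 : ∀ a b c : A, w (v a b) c = v a (w b c) := fun a b c => (hd a b c).2.1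
  have D3 : ∀ a b c : A, v (w a b + v a b) c = v a (v b c) := fun a b c => (hd a b c).2.2
  have Rw' : ∀ a b c : A, B (w a b) c = B a (w b c) + B a (v b c) - B b (v c a) := by
    intro a b c
    have h := hcoc b c a
    rw [map_add, LinearMap.add_apply] at h
    rw [hsym (w a b) c, hsym a (w b c), hsym a (v b c)]
    linear_combination -h
  have Rv' : ∀ a b c : A, B (v a b) c = B b (w c a) + B b (v c a) - B a (w b c) := by
    intro a b c
    have h := hcoc c a b
    rw [map_add, LinearMap.add_apply] at h
    rw [hsym (v a b) c, hsym b (w c a), hsym b (v c a)]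
    linear_combination -h
  have F2 : ∀ p a b : A, B p (w a b) = B a (w b p) + B a (v b p) - B b (v p a) := by
    intro p a b; rw [hsym p (w a b), Rw']
  have F1 : ∀ p a b : A, B p (v a b) = B b (w p a) + B b (v p a) - B a (w b p) := by
    intro p a b; rw [hsym p (v a b), Rv']
  have W2 : ∀ a b : A, w a b = nw a b + ne a b := by
    intro a b; apply ext0; intro t
    simp only [map_add, LinearMap.add_apply, hnw, hne, Rw']
    ring
  have V2 : ∀ a b : A, v a b = sw a b + se a b := by
    intro a b; apply ext0; intro t
    simp only [map_add, LinearMap.add_apply, hsw, hse, Rv']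
    ring
  have BD3 : ∀ p a b c : A, B p (v (w a b) c) + B p (v (v a b) c) = B p (v a (v b c)) := by
    intro p a b c
    have h := congrArg (fun u => B p u) (D3 a b c)
    simp only [map_add, LinearMap.add_apply] at h
    exact h
  refine ⟨?_, fun x y => ⟨W2 x y, V2 x y⟩⟩
  intro x y z
  have hsum : ∀ a b : A, nw a b + ne a b + sw a b + se a b = w a b + v a b := by
    intro a b; rw [W2, V2]; abel
  refine ⟨?_, ?_, ?_, ?_, ?_, ?_, ?_, ?_, ?_⟩
  · -- A1
    rw [hsum]
    apply ext0; intro t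
    simp only [hnw, map_add, LinearMap.add_apply, D1, D2]
    linear_combination -(BD3 x y z t)
  · -- A2
    apply ext0; intro t
    simp only [hnw, hne, hsw, map_add, LinearMap.add_apply, map_neg, LinearMap.neg_apply, neg_neg, D1, D2]
    linear_combination -(BD3 y z t x)
  · -- A3
    rw [show nw x y + ne x y = w x y from (W2 x y).symm]
    apply ext0; intro t
    simp only [hnw, hne, hsw, hse, map_add, LinearMap.add_apply, map_neg, LinearMap.neg_apply, neg_neg]
    rw [F1 z t (w x y), F2 z (v t x) y]
    simp only [Rw', Rv', D1, D2, map_add, LinearMap.add_apply]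
    linear_combination BD3 y z t x + BD3 x y z t
  · -- A4
    rw [show nw y z + ne y z = w y z from (W2 y z).symm]
    apply ext0; intro t
    simp only [hnw, hsw, map_add, LinearMap.add_apply, map_neg, LinearMap.neg_apply, D1, D2]
  · -- A5
    apply ext0; intro t
    simp only [hnw, hse, map_add, LinearMap.add_apply, D1, D2]
    linear_combination BD3 y z t x
  · -- A6
    rw [show sw x y + se x y = v x y from (V2 x y).symm]
    apply ext0; intro t
    simp only [hne, hse, map_add, LinearMap.add_apply, map_neg, LinearMap.neg_apply, neg_neg]
    linear_combination BD3 z t x y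
  · -- A7
    rw [show sw y z + se y z = v y z from (V2 y z).symm]
    apply ext0; intro t
    simp only [hnw, hsw, map_add, LinearMap.add_apply, map_neg, LinearMap.neg_apply, D1, D2]
    ring
  · -- A8
    apply ext0; intro t
    simp only [hne, hse, hsw, map_add, LinearMap.add_apply, map_neg, LinearMap.neg_apply, neg_neg, D1, D2]
    ring
  · -- A9
    rw [hsum]
    apply ext0; intro t
    simp only [hse, map_add, LinearMap.add_apply, D1, D2]
    linear_combination -(BD3 z t x y)
end

section
/- Every Manin triple of dendriform dialgebras associated to a nondegenerate 2-cocycle is isomorphic to a standard one, i.e., to one of the form (A⁺ ⊕ (A⁺)*, A⁺, (A⁺)*, 𝔅_S) where 𝔅_S(x + a*, y + b*) = ⟨a*, y⟩ + ⟨x, b*⟩. -/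
/-- The standard bilinear form `𝔅_S(x+a*, y+b*) = ⟨a*,y⟩ + ⟨x,b*⟩` on `P ⊕ P*`. -/
def standardForm {F P : Type*} [Field F] [AddCommGroup P] [Module F P]
    (u v : P × Module.Dual F P) : F :=
  u.2 v.1 + v.2 u.1

set_option maxHeartbeats 2000000 in
/-- every (finite-dimensional) Manin triple `(A, A⁺, A⁻, 𝔅)` of
dendriform dialgebras associated to a nondegenerate 2-cocycle is isomorphic to a
standard one on `A⁺ ⊕ (A⁺)*` with the standard bilinear form `𝔅_S`. -/
theorem manin_triple_isomorphic_standard {F A : Type*} [Field F] [AddCommGroup A]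
    [Module F A] [FiniteDimensional F A]
    (w v : A →ₗ[F] A →ₗ[F] A)
    (hd : DendriformEqs (fun x y => w x y) (fun x y => v x y))
    (B : A →ₗ[F] A →ₗ[F] F)
    (hsym : ∀ x y : A, B x y = B y x)
    (hnd : ∀ x : A, (∀ y : A, B x y = 0) → x = 0)
    (hcoc : ∀ x y z : A, B (w x y + v x y) z = B y (w z x) + B x (v y z))
    (P M : Submodule F A) (hcompl : IsCompl P M)
    (hPsub : ∀ x ∈ P, ∀ y ∈ P, w x y ∈ P ∧ v x y ∈ P)
    (hMsub : ∀ x ∈ M, ∀ y ∈ M, w x y ∈ M ∧ v x y ∈ M)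
    (hPiso : ∀ x ∈ P, ∀ y ∈ P, B x y = 0)
    (hMiso : ∀ x ∈ M, ∀ y ∈ M, B x y = 0) :
    ∃ (w' v' : (P × Module.Dual F P) →ₗ[F] (P × Module.Dual F P) →ₗ[F]
        (P × Module.Dual F P)) (φ : A ≃ₗ[F] P × Module.Dual F P),
      -- the standard space is a dendriform dialgebra
      DendriformEqs (fun u u' => w' u u') (fun u u' => v' u u') ∧
      -- `P` (first factor) and `P*` (second factor) are sub-dialgebras
      (∀ u u' : P × Module.Dual F P, u.2 = 0 → u'.2 = 0 →
        (w' u u').2 = 0 ∧ (v' u u').2 = 0) ∧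
      (∀ u u' : P × Module.Dual F P, u.1 = 0 → u'.1 = 0 →
        (w' u u').1 = 0 ∧ (v' u u').1 = 0) ∧
      -- the standard bilinear form is a 2-cocycle
      (∀ u u' u'' : P × Module.Dual F P,
        standardForm (F := F) (w' u u' + v' u u') u''
          = standardForm (F := F) u' (w' u'' u) + standardForm (F := F) u (v' u' u'')) ∧
      -- `φ` is an isomorphism of Manin triples
      (∀ x y : A, φ (w x y) = w' (φ x) (φ y) ∧ φ (v x y) = v' (φ x) (φ y)) ∧
      (∀ x ∈ P, (φ x).2 = 0) ∧ (∀ x ∈ M, (φ x).1 = 0) ∧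
      (∀ x y : A, B x y = standardForm (F := F) (φ x) (φ y)) := by
  classical
  set pP := P.linearProjOfIsCompl M hcompl with hpPdef
  set pM := M.linearProjOfIsCompl P hcompl.symm with hpMdef
  have hsum : ∀ x : A, (pP x : A) + (pM x : A) = x := fun x =>
    Submodule.projection_add_projection_eq_self hcompl x
  -- key nondegeneracy facts
  have keyM : ∀ m : A, m ∈ M → (∀ p ∈ P, B m p = 0) → m = 0 := by
    intro m hm h
    apply hnd
    intro y
    rw [← hsum y, map_add]
    rw [h (pP y) (pP y).2, hMiso m hm (pM y) (pM y).2, add_zero]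
  have keyP : ∀ p : A, p ∈ P → (∀ m ∈ M, B p m = 0) → p = 0 := by
    intro p hp h
    apply hnd
    intro y
    rw [← hsum y, map_add]
    rw [h (pM y) (pM y).2, hPiso p hp (pP y) (pP y).2, zero_add]
  -- the dual-valued map
  let ψ : A →ₗ[F] Module.Dual F P :=
    { toFun := fun x => ((B (pM x)).comp P.subtype)
      map_add' := by intro a b; ext p; simp
      map_smul' := by intro c a; ext p; simp }
  have hψ : ∀ (x : A) (p : P), ψ x p = B (pM x) p := fun _ _ => rfl
  let Φ : A →ₗ[F] P × Module.Dual F P := pP.prod ψ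
  have hΦ1 : ∀ x : A, (Φ x).1 = pP x := fun _ => rfl
  have hΦ2 : ∀ x : A, (Φ x).2 = ψ x := fun _ => rfl
  have hinj : Function.Injective Φ := by
    intro a b hab
    rw [← sub_eq_zero]
    set x := a - b with hx
    have hΦx : Φ x = 0 := by rw [hx, map_sub, hab, sub_self]
    have h1 : pP x = 0 := congrArg Prod.fst hΦx
    have h2 : ψ x = 0 := congrArg Prod.snd hΦx
    have hpMx : (pM x : A) = 0 := by
      apply keyM _ (pM x).2
      intro p hp
      have := congrArg (fun f => f ⟨p, hp⟩) h2
      simpa [hψ] using this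
    have := hsum x
    rw [h1, hpMx] at this
    simpa using this.symm
  -- dimension count
  have hMP : Module.finrank F M = Module.finrank F P := by
    have hle1 : Module.finrank F M ≤ Module.finrank F P := by
      let ψM : M →ₗ[F] Module.Dual F P :=
        { toFun := fun m => ((B (m : A)).comp P.subtype)
          map_add' := by intro a b; ext p; simp
          map_smul' := by intro c a; ext p; simp }
      have : Function.Injective ψM := by
        intro a b hab
        rw [← sub_eq_zero]
        have h0 : ((a - b : M) : A) = 0 := by
          apply keyM _ (a - b).2
          intro p hp
          have := congrArg (fun f => f ⟨p, hp⟩) (sub_eq_zero.mpr hab)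
          simpa [ψM, sub_eq_zero] using this
        exact Subtype.ext h0
      calc Module.finrank F M ≤ Module.finrank F (Module.Dual F P) :=
            LinearMap.finrank_le_finrank_of_injective this
        _ = Module.finrank F P := Subspace.dual_finrank_eq
    have hle2 : Module.finrank F P ≤ Module.finrank F M := by
      let ψP : P →ₗ[F] Module.Dual F M :=
        { toFun := fun p => ((B (p : A)).comp M.subtype)
          map_add' := by intro a b; ext m; simp
          map_smul' := by intro c a; ext m; simp }
      have : Function.Injective ψP := by
        intro a b hab
        rw [← sub_eq_zero]
        have h0 : ((a - b : P) : A) = 0 := by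
          apply keyP _ (a - b).2
          intro m hm
          have := congrArg (fun f => f ⟨m, hm⟩) (sub_eq_zero.mpr hab)
          simpa [ψP, sub_eq_zero] using this
        exact Subtype.ext h0
      calc Module.finrank F P ≤ Module.finrank F (Module.Dual F M) :=
            LinearMap.finrank_le_finrank_of_injective this
        _ = Module.finrank F M := Subspace.dual_finrank_eq
    exact le_antisymm hle1 hle2
  have hdim : Module.finrank F A = Module.finrank F (P × Module.Dual F P) := by
    rw [Module.finrank_prod, Subspace.dual_finrank_eq,
      ← Submodule.finrank_add_eq_of_isCompl hcompl, hMP]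
  have hsurj : Function.Surjective Φ :=
    (LinearMap.injective_iff_surjective_of_finrank_eq_finrank hdim).mp hinj
  let φ : A ≃ₗ[F] P × Module.Dual F P := LinearEquiv.ofBijective Φ ⟨hinj, hsurj⟩
  have hφ : ∀ x : A, φ x = Φ x := fun _ => rfl
  -- membership characterizations
  have hmemP : ∀ x : A, (φ x).2 = 0 ↔ x ∈ P := by
    intro x
    constructor
    · intro h
      have hpMx : (pM x : A) = 0 := by
        apply keyM _ (pM x).2
        intro p hp
        have := congrArg (fun f => f ⟨p, hp⟩) h
        simpa [hφ, hΦ2, hψ] using this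
      have := hsum x
      rw [hpMx, add_zero] at this
      rw [← this]; exact (pP x).2
    · intro hx
      have hpMx : pM x = 0 := Submodule.linearProjOfIsCompl_apply_right' hcompl.symm hx
      ext p
      simp [hφ, hΦ2, hψ, hpMx]
  have hmemM : ∀ x : A, (φ x).1 = 0 ↔ x ∈ M := by
    intro x
    rw [hφ, hΦ1]
    exact Submodule.linearProjOfIsCompl_apply_eq_zero_iff hcompl
  -- B is the standard form under φ
  have hB : ∀ x y : A, B x y = standardForm (F := F) (φ x) (φ y) := by
    intro x y
    have : standardForm (F := F) (φ x) (φ y)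
        = B (pM x) (pP y) + B (pM y) (pP x) := by
      simp [standardForm, hφ, hΦ1, hΦ2, hψ]
    rw [this]
    conv_lhs => rw [← hsum x, ← hsum y]
    simp only [map_add, LinearMap.add_apply]
    rw [hPiso (pP x) (pP x).2 (pP y) (pP y).2, hMiso (pM x) (pM x).2 (pM y) (pM y).2]
    rw [hsym (pP x : A) (pM y : A)]
    ring
  -- transported operations
  let w' : (P × Module.Dual F P) →ₗ[F] (P × Module.Dual F P) →ₗ[F] (P × Module.Dual F P) :=
    (w.compl₁₂ φ.symm.toLinearMap φ.symm.toLinearMap).compr₂ (φ : A →ₗ[F] P × Module.Dual F P)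
  let v' : (P × Module.Dual F P) →ₗ[F] (P × Module.Dual F P) →ₗ[F] (P × Module.Dual F P) :=
    (v.compl₁₂ φ.symm.toLinearMap φ.symm.toLinearMap).compr₂ (φ : A →ₗ[F] P × Module.Dual F P)
  have hφw : ∀ x y : A, φ (w x y) = w' (φ x) (φ y) := by
    intro x y
    simp only [w', LinearMap.compr₂_apply, LinearMap.compl₁₂_apply,
      LinearEquiv.coe_coe, LinearEquiv.symm_apply_apply]
  have hφv : ∀ x y : A, φ (v x y) = v' (φ x) (φ y) := by
    intro x y
    simp only [v', LinearMap.compr₂_apply, LinearMap.compl₁₂_apply,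
      LinearEquiv.coe_coe, LinearEquiv.symm_apply_apply]
  refine ⟨w', v', φ, ?_, ?_, ?_, ?_, fun x y => ⟨hφw x y, hφv x y⟩, ?_, ?_, hB⟩
  · -- DendriformEqs
    intro u u' u''
    obtain ⟨x, rfl⟩ := φ.surjective u
    obtain ⟨y, rfl⟩ := φ.surjective u'
    obtain ⟨z, rfl⟩ := φ.surjective u''
    dsimp only
    refine ⟨?_, ?_, ?_⟩
    · rw [← hφw, ← hφw, ← hφw, ← hφv, ← map_add, ← hφw]
      exact congrArg φ (hd x y z).1
    · rw [← hφv, ← hφw, ← hφw, ← hφv]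
      exact congrArg φ (hd x y z).2.1
    · rw [← hφw, ← hφv, ← map_add, ← hφv, ← hφv, ← hφv]
      exact congrArg φ (hd x y z).2.2
  · -- first factor is a subalgebra
    intro u u' h2 h2'
    obtain ⟨x, rfl⟩ := φ.surjective u
    obtain ⟨y, rfl⟩ := φ.surjective u'
    have hx : x ∈ P := (hmemP x).mp h2
    have hy : y ∈ P := (hmemP y).mp h2'
    constructor
    · rw [← hφw]; exact (hmemP _).mpr (hPsub x hx y hy).1
    · rw [← hφv]; exact (hmemP _).mpr (hPsub x hx y hy).2
  · -- second factor is a subalgebra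
    intro u u' h1 h1'
    obtain ⟨x, rfl⟩ := φ.surjective u
    obtain ⟨y, rfl⟩ := φ.surjective u'
    have hx : x ∈ M := (hmemM x).mp h1
    have hy : y ∈ M := (hmemM y).mp h1'
    constructor
    · rw [← hφw]; exact (hmemM _).mpr (hMsub x hx y hy).1
    · rw [← hφv]; exact (hmemM _).mpr (hMsub x hx y hy).2
  · -- cocycle
    intro u u' u''
    obtain ⟨x, rfl⟩ := φ.surjective u
    obtain ⟨y, rfl⟩ := φ.surjective u'
    obtain ⟨z, rfl⟩ := φ.surjective u''
    rw [← hφw, ← hφv, ← map_add, ← hB, ← hφw z x, ← hφv, ← hB, ← hB]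
    exact hcoc x y z
  · intro x hx; exact (hmemP x).mpr hx
  · intro x hx; exact (hmemM x).mpr hx
end

section
/- Let A be a vector space with a collection Ω of bilinear operations, and let N : A → A be a linear operator satisfying, for each ∗ ∈ Ω, the Nijenhuis identity N(x)∗N(y) = N(N(x)∗y + x∗N(y) − N(x∗y)) for all x, y ∈ A. If N² = λ²·id for a scalar λ, then P := (−λ·id − N)/2 is a Rota-Baxter operator of weight λ, i.e., for each ∗ ∈ Ω, P(x)∗P(y) = P(P(x)∗y + x∗P(y) + λ x∗y) for all x, y ∈ A. -/
/-- if `N` is a Nijenhuis operator for every operation in a family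
`Ω` of bilinear operations on `A` and `N² = λ²·id`, then `P = (−λ·id − N)/2`
is a Rota-Baxter operator of weight `λ` for every operation in `Ω`. -/
theorem nijenhuis_to_rota_baxter {F A ι : Type*} [Field F] [AddCommGroup A]
    [Module F A] [Fintype ι] (hchar : (2 : F) ≠ 0)
    (ops : ι → A →ₗ[F] A →ₗ[F] A) (N : A →ₗ[F] A) (lam : F)
    (hNij : ∀ (i : ι) (x y : A),
      ops i (N x) (N y) = N (ops i (N x) y + ops i x (N y) - N (ops i x y)))
    (hN2 : ∀ x : A, N (N x) = (lam * lam) • x)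
    (P : A → A) (hP : ∀ x : A, P x = (2 : F)⁻¹ • (-(lam • x) - N x)) :
    ∀ (i : ι) (x y : A),
      ops i (P x) (P y) = P (ops i (P x) y + ops i x (P y) + lam • ops i x y) := by
  intro i x y
  have key : ops i (N x) (N y)
      = N (ops i (N x) y) + N (ops i x (N y)) - (lam * lam) • ops i x y := by
    rw [hNij i x y]; rw [map_sub, map_add, hN2]
  simp only [hP, map_smul, map_sub, map_neg, map_add, LinearMap.sub_apply,
    LinearMap.neg_apply, LinearMap.smul_apply, LinearMap.add_apply, smul_sub,
    smul_add, smul_neg, key, hN2]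
  match_scalars <;> field_simp <;> ring
end

section
/- Let (A, ↖, ↗, ↙, ↘) be a quadri-algebra. Then on the vector space A ⊕ A with dendriform operations (x₁, y₁) ∧ (x₂, y₂) := (x₁∧x₂, x₁↗y₂ + y₁↖x₂) and (x₁, y₁) ∨ (x₂, y₂) := (x₁∨x₂, x₁↘y₂ + y₁↙x₂) (the semidirect sum A_v ⋉ A via the bimodule (A, L_↗, R_↖, L_↘, R_↙)), the linear operator N((x, y)) := (λ₁y + λ₂x, λ₃x + λ₄y) is a Nijenhuis operator for any scalars λ₁, λ₂, λ₃, λ₄, i.e., N(u)∘N(v) = N(N(u)∘v + u∘N(v) − N(u∘v)) for ∘ ∈ {∧, ∨}. -/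
/-- The `∧`-operation of the semidirect sum `A_v ⋉ A` via the bimodule
`(A, L_↗, R_↖, L_↘, R_↙)`: `(x₁,y₁) ∧ (x₂,y₂) = (x₁∧x₂, x₁↗y₂ + y₁↖x₂)`. -/
def sdWedge {F A : Type*} [Field F] [AddCommGroup A] [Module F A]
    (nw ne : A →ₗ[F] A →ₗ[F] A) : A × A → A × A → A × A :=
  fun u v => (nw u.1 v.1 + ne u.1 v.1, ne u.1 v.2 + nw u.2 v.1)

/-- The `∨`-operation of the semidirect sum `A_v ⋉ A`:
`(x₁,y₁) ∨ (x₂,y₂) = (x₁∨x₂, x₁↘y₂ + y₁↙x₂)`. -/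
def sdVee {F A : Type*} [Field F] [AddCommGroup A] [Module F A]
    (sw se : A →ₗ[F] A →ₗ[F] A) : A × A → A × A → A × A :=
  fun u v => (sw u.1 v.1 + se u.1 v.1, se u.1 v.2 + sw u.2 v.1)

/-- for any scalars `λ₁,λ₂,λ₃,λ₄`, the operator
`N((x,y)) = (λ₁y + λ₂x, λ₃x + λ₄y)` is a Nijenhuis operator on the semidirect
sum `A_v ⋉ A` of a quadri-algebra. -/
theorem nijenhuis_on_semidirect_sum {F A : Type*} [Field F] [AddCommGroup A] [Module F A]
    (nw ne sw se : A →ₗ[F] A →ₗ[F] A)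
    (hq : QuadriEqs (fun x y => nw x y) (fun x y => ne x y)
      (fun x y => sw x y) (fun x y => se x y))
    (l1 l2 l3 l4 : F)
    (N : A × A → A × A)
    (hN : ∀ u : A × A, N u = (l1 • u.2 + l2 • u.1, l3 • u.1 + l4 • u.2)) :
    ∀ u v : A × A,
      sdWedge nw ne (N u) (N v)
          = N (sdWedge nw ne (N u) v + sdWedge nw ne u (N v) - N (sdWedge nw ne u v)) ∧
      sdVee sw se (N u) (N v)
          = N (sdVee sw se (N u) v + sdVee sw se u (N v) - N (sdVee sw se u v)) := by
  rintro ⟨x1, y1⟩ ⟨x2, y2⟩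
  simp only [sdWedge, sdVee, hN, Prod.mk_add_mk, Prod.mk_sub_mk, Prod.mk.injEq,
    map_add, map_smul, map_sub, LinearMap.add_apply, LinearMap.smul_apply,
    LinearMap.sub_apply, smul_add, smul_sub, smul_smul]
  refine ⟨⟨?_, ?_⟩, ?_, ?_⟩ <;> module
end

section
/- Let (A, ↖, ↗, ↙, ↘) be a finite-dimensional quadri-algebra and let ω : A ⊗ A → F be a 2-cocycle of the quadri-algebra, i.e., ω(x, y∧z) = −ω(x↙y, z) + ω(z≻x, y) and ω(x, y∨z) = ω(x≺y, z) − ω(z↗x, y) for all x, y, z ∈ A. Then the symmetrization 𝔅(x, y) := ω(x, y) + ω(y, x) is a 2-cocycle of the associated vertical dendriform dialgebra (A, ∧, ∨), i.e., 𝔅(x⋆y, z) = 𝔅(y, z∧x) + 𝔅(x, y∨z). -/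
/-- the symmetrization `𝔅(x,y) = ω(x,y) + ω(y,x)` of a 2-cocycle
`ω` of a quadri-algebra is a 2-cocycle of the associated vertical dendriform
dialgebra `(A,∧,∨)`. -/
theorem quadri_cocycle_symmetrization {F A : Type*} [Field F] [AddCommGroup A]
    [Module F A] [FiniteDimensional F A]
    (nw ne sw se : A →ₗ[F] A →ₗ[F] A)
    (hq : QuadriEqs (fun x y => nw x y) (fun x y => ne x y)
      (fun x y => sw x y) (fun x y => se x y))
    (om : A →ₗ[F] A →ₗ[F] F)
    (hcoc1 : ∀ x y z : A,
      om x (nw y z + ne y z) = -om (sw x y) z + om (ne z x + se z x) y)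
    (hcoc2 : ∀ x y z : A,
      om x (sw y z + se y z) = om (nw x y + sw x y) z - om (ne z x) y) :
    (∀ x y : A, om x y + om y x = om y x + om x y) ∧
      ∀ x y z : A,
        om (nw x y + ne x y + sw x y + se x y) z
            + om z (nw x y + ne x y + sw x y + se x y)
          = (om y (nw z x + ne z x) + om (nw z x + ne z x) y)
            + (om x (sw y z + se y z) + om (sw y z + se y z) x) := by
  refine ⟨fun x y => add_comm _ _, fun x y z => ?_⟩
  have h1 := hcoc1 y z x
  have h2 := hcoc2 x y z
  have h3 := hcoc1 z x y
  have h4 := hcoc2 z x y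
  simp only [map_add, LinearMap.add_apply] at h1 h2 h3 h4 ⊢
  linear_combination h3 + h4 - h1 - h2
end

section
/- Let (A, ↖, ↗, ↙, ↘) be a finite-dimensional quadri-algebra, let r ∈ A ⊗ A be skew-symmetric, and let T_r : A* → A be the induced linear map, ⟨u*, T_r(v*)⟩ = ⟨u* ⊗ v*, r⟩. Then r satisfies the Q-equation (the pair of equations r₂₃∧r₁₂ − r₁₃≻r₂₃ + r₁₂↙r₁₃ = 0 and r₂₃∨r₁₂ − r₁₂≺r₁₃ + r₁₃↗r₂₃ = 0 in A⊗A⊗A) if and only if T_r is an O-operator of the vertical dendriform dialgebra A_v = (A, ∧, ∨) associated to the bimodule (A*, −R_↙*, L_≻*, R_≺*, −L_↗*), i.e., T_r(a*)∧T_r(b*) = T_r(−R_↙*(T_r(a*))b* + L_≻*(T_r(b*))a*) and T_r(a*)∨T_r(b*) = T_r(R_≺*(T_r(a*))b* − L_↗*(T_r(b*))a*) for all a*, b* ∈ A*. -/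
open TensorProduct in
/-- contraction: `x ⊗ y ⊗ z ↦ g x • f z • y` -/
noncomputable def contr {F A : Type*} [Field F] [AddCommGroup A] [Module F A]
    (f g : Module.Dual F A) : (A ⊗[F] (A ⊗[F] A)) →ₗ[F] A :=
  TensorProduct.lift (g.smulRight (TensorProduct.lift
    (LinearMap.mk₂ F (fun y z => f z • y)
      (fun m n z => by simp [smul_add])
      (fun c m z => smul_comm _ _ _)
      (fun m z z' => by simp [map_add, add_smul])
      (fun c m z => by simp [map_smul, smul_eq_mul, mul_smul]))))

open TensorProduct in
@[simp] lemma contr_tmul {F A : Type*} [Field F] [AddCommGroup A] [Module F A]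
    (f g : Module.Dual F A) (x y z : A) :
    contr f g (x ⊗ₜ[F] (y ⊗ₜ[F] z)) = g x • f z • y := by
  simp [contr]

open TensorProduct in
lemma contr_zero_iff {F A : Type*} [Field F] [AddCommGroup A] [Module F A]
    [FiniteDimensional F A] (t : A ⊗[F] (A ⊗[F] A)) :
    t = 0 ↔ ∀ f g : Module.Dual F A, contr f g t = 0 := by
  constructor
  · rintro rfl f g; simp
  · intro h
    set B := Module.finBasis F A
    set C := B.tensorProduct (B.tensorProduct B) with hC
    apply C.repr.injective
    ext ⟨i, j, k⟩
    have key : (C.coord (i, (j, k))) = (B.coord j).comp (contr (B.coord k) (B.coord i)) := by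
      apply TensorProduct.ext'
      intro x yz
      induction yz using TensorProduct.induction_on with
      | zero => simp
      | tmul y z =>
        simp [hC, Module.Basis.coord_apply, Module.Basis.tensorProduct_repr_tmul_apply, mul_comm,
          mul_left_comm]
      | add u v hu hv => simp_all [tmul_add]
    have := congrArg (fun φ : _ →ₗ[F] F => φ t) key
    simp only [Module.Basis.coord_apply, LinearMap.comp_apply, h] at this
    simpa using this

open TensorProduct in
/-- STATEMENT 19 docstring placeholder -/
theorem Q_equation_iff_O_operator {F A ι : Type*} [Field F] [AddCommGroup A]
    [Module F A] [FiniteDimensional F A] [Fintype ι]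
    (nw ne sw se : A →ₗ[F] A →ₗ[F] A)
    (hq : QuadriEqs (fun x y => nw x y) (fun x y => ne x y)
      (fun x y => sw x y) (fun x y => se x y))
    (a b : ι → A)
    (hskew : (TensorProduct.comm F A A) (∑ i, a i ⊗ₜ[F] b i)
      = -(∑ i, a i ⊗ₜ[F] b i))
    (T : Module.Dual F A →ₗ[F] A)
    (hT : ∀ f : Module.Dual F A, T f = ∑ i, f (b i) • a i) :
    ((∑ i, ∑ j, a j ⊗ₜ[F] ((nw (a i) (b j) + ne (a i) (b j)) ⊗ₜ[F] b i)
        - ∑ i, ∑ j, a i ⊗ₜ[F] (a j ⊗ₜ[F] (ne (b i) (b j) + se (b i) (b j)))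
        + ∑ i, ∑ j, sw (a i) (a j) ⊗ₜ[F] (b i ⊗ₜ[F] b j)
          = (0 : A ⊗[F] (A ⊗[F] A))) ∧
      (∑ i, ∑ j, a j ⊗ₜ[F] ((sw (a i) (b j) + se (a i) (b j)) ⊗ₜ[F] b i)
        - ∑ i, ∑ j, (nw (a i) (a j) + sw (a i) (a j)) ⊗ₜ[F] (b i ⊗ₜ[F] b j)
        + ∑ i, ∑ j, a i ⊗ₜ[F] (a j ⊗ₜ[F] ne (b i) (b j))
          = (0 : A ⊗[F] (A ⊗[F] A)))) ↔
      (∀ f g : Module.Dual F A,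
        (nw (T f) (T g) + ne (T f) (T g)
            = T (-(g ∘ₗ sw.flip (T f)) + f ∘ₗ (ne + se) (T g))) ∧
        (sw (T f) (T g) + se (T f) (T g)
            = T ((g ∘ₗ (nw + sw).flip (T f)) - f ∘ₗ ne (T g)))) := by
  classical
  -- skew swap lemma
  have hswap : ∀ β : A →ₗ[F] A →ₗ[F] A,
      ∑ i, β (b i) (a i) = -∑ i, β (a i) (b i) := by
    intro β
    have h := congrArg (TensorProduct.lift β) hskew
    simpa [map_sum] using h
  -- key identity 1
  have key1 : ∀ f g : Module.Dual F A,
      contr f g (∑ i, ∑ j, a j ⊗ₜ[F] ((nw (a i) (b j) + ne (a i) (b j)) ⊗ₜ[F] b i)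
        - ∑ i, ∑ j, a i ⊗ₜ[F] (a j ⊗ₜ[F] (ne (b i) (b j) + se (b i) (b j)))
        + ∑ i, ∑ j, sw (a i) (a j) ⊗ₜ[F] (b i ⊗ₜ[F] b j))
      = T (-(g ∘ₗ sw.flip (T f)) + f ∘ₗ (ne + se) (T g))
        - (nw (T f) (T g) + ne (T f) (T g)) := by
      intro f g
      simp only [map_sub, map_add, map_sum, contr_tmul]
      simp only [hT, map_sum, map_smul, map_add, map_neg, LinearMap.sum_apply, LinearMap.smul_apply,
        LinearMap.add_apply, LinearMap.neg_apply, LinearMap.comp_apply, LinearMap.flip_apply,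
        smul_eq_mul]
      set N1 : A := ∑ x, ∑ y, (f (b x) * g (b y)) • (nw (a x) (a y) + ne (a x) (a y)) with hN1
      set N2 : A := ∑ x, ∑ y, (g (b x) * (f (ne (a x) (b y)) + f (se (a x) (b y)))) • a y with hN2
      set N3 : A := ∑ x, ∑ y, (f (b x) * g (sw (b y) (a x))) • a y with hN3
      have hA1 : ∑ x : ι, ∑ y : ι, g (a y) • f (b x) • (nw (a x) (b y) + ne (a x) (b y))
          = -N1 := by
        have h := hswap (g.smulRight (∑ x, f (b x) • (nw (a x) + ne (a x))))
        simp only [LinearMap.smulRight_apply, LinearMap.smul_apply, LinearMap.sum_apply,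
          LinearMap.add_apply, Finset.smul_sum] at h
        rw [Finset.sum_comm, neg_eq_iff_eq_neg.mp h.symm, hN1, neg_inj, Finset.sum_comm]
        refine Finset.sum_congr rfl fun y _ => Finset.sum_congr rfl fun x _ => ?_
        module
      have hA2 : ∑ x : ι, ∑ y : ι, g (a x) • (f (ne (b x) (b y)) + f (se (b x) (b y))) • a y
          = -N2 := by
        have h := hswap (g.smulRight
          (∑ y, ((f ∘ₗ (ne.flip (b y) + se.flip (b y))).smulRight (a y))))
        simp only [LinearMap.smulRight_apply, LinearMap.smul_apply, LinearMap.sum_apply,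
          LinearMap.add_apply, LinearMap.comp_apply, LinearMap.flip_apply, map_add,
          Finset.smul_sum] at h
        rw [neg_eq_iff_eq_neg.mp h.symm, hN2, neg_inj]
        refine Finset.sum_congr rfl fun x _ => Finset.sum_congr rfl fun y _ => ?_
        module
      have hA3 : ∑ x : ι, ∑ y : ι, g (sw (a x) (a y)) • f (b y) • b x
          = -N3 := by
        have h := hswap ((∑ y, f (b y) • (g ∘ₗ sw.flip (a y))).smulRight
          (LinearMap.id : A →ₗ[F] A))
        simp only [LinearMap.smulRight_apply, LinearMap.smul_apply, LinearMap.sum_apply,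
          LinearMap.comp_apply, LinearMap.flip_apply, LinearMap.id_apply, smul_eq_mul,
          Finset.sum_smul] at h
        calc ∑ x : ι, ∑ y : ι, g (sw (a x) (a y)) • f (b y) • b x
            = ∑ x : ι, ∑ y : ι, (f (b y) * g (sw (a x) (a y))) • b x := by
              refine Finset.sum_congr rfl fun x _ => Finset.sum_congr rfl fun y _ => ?_
              module
          _ = -N3 := by
              rw [neg_eq_iff_eq_neg.mp h.symm, hN3, neg_inj, Finset.sum_comm]
      have hB1 : ∑ x : ι, (-∑ y : ι, f (b y) * g (sw (b x) (a y))) • a x = -N3 := by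
        simp only [neg_smul, Finset.sum_neg_distrib, Finset.sum_smul, hN3, neg_inj]
        rw [Finset.sum_comm]
      have hB2 : ∑ x : ι, (∑ y : ι, g (b y) * (f (ne (a y) (b x)) + f (se (a y) (b x)))) • a x
          = N2 := by
        simp only [Finset.sum_smul, hN2]
        rw [Finset.sum_comm]
      have hB3 : ∑ x : ι, g (b x) • ∑ y : ι, f (b y) • nw (a y) (a x)
          + ∑ x : ι, g (b x) • ∑ y : ι, f (b y) • ne (a y) (a x) = N1 := by
        rw [hN1]
        simp only [smul_add, Finset.sum_add_distrib, Finset.smul_sum]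
        congr 1 <;>
        · rw [Finset.sum_comm]
          refine Finset.sum_congr rfl fun x _ => Finset.sum_congr rfl fun y _ => ?_
          module
      rw [hA1, hA2, hA3, hB1, hB2, hB3]
      abel

  have key2 : ∀ f g : Module.Dual F A,
      contr f g (∑ i, ∑ j, a j ⊗ₜ[F] ((sw (a i) (b j) + se (a i) (b j)) ⊗ₜ[F] b i)
        - ∑ i, ∑ j, (nw (a i) (a j) + sw (a i) (a j)) ⊗ₜ[F] (b i ⊗ₜ[F] b j)
        + ∑ i, ∑ j, a i ⊗ₜ[F] (a j ⊗ₜ[F] ne (b i) (b j)))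
      = T ((g ∘ₗ (nw + sw).flip (T f)) - f ∘ₗ ne (T g))
        - (sw (T f) (T g) + se (T f) (T g)) := by
      intro f g
      simp only [map_sub, map_add, map_sum, contr_tmul]
      simp only [hT, map_sum, map_smul, map_add, map_sub, map_neg, LinearMap.sum_apply,
        LinearMap.smul_apply, LinearMap.add_apply, LinearMap.sub_apply, LinearMap.neg_apply,
        LinearMap.comp_apply, LinearMap.flip_apply, smul_eq_mul]
      set M1 : A := ∑ x, ∑ y, (f (b x) * g (b y)) • (sw (a x) (a y) + se (a x) (a y)) with hM1
      set M2 : A := ∑ x, ∑ y, (f (b x) * (g (nw (b y) (a x)) + g (sw (b y) (a x)))) • a y with hM2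
      set M3 : A := ∑ x, ∑ y, (g (b x) * f (ne (a x) (b y))) • a y with hM3
      have hA1 : ∑ x : ι, ∑ y : ι, g (a y) • f (b x) • (sw (a x) (b y) + se (a x) (b y))
          = -M1 := by
        have h := hswap (g.smulRight (∑ x, f (b x) • (sw (a x) + se (a x))))
        simp only [LinearMap.smulRight_apply, LinearMap.smul_apply, LinearMap.sum_apply,
          LinearMap.add_apply, Finset.smul_sum] at h
        rw [Finset.sum_comm, neg_eq_iff_eq_neg.mp h.symm, hM1, neg_inj, Finset.sum_comm]
        refine Finset.sum_congr rfl fun y _ => Finset.sum_congr rfl fun x _ => ?_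
        module
      have hA2 : ∑ x : ι, ∑ y : ι, (g (nw (a x) (a y)) + g (sw (a x) (a y))) • f (b y) • b x
          = -M2 := by
        have h := hswap ((∑ y, f (b y) • (g ∘ₗ (nw + sw).flip (a y))).smulRight
          (LinearMap.id : A →ₗ[F] A))
        simp only [LinearMap.smulRight_apply, LinearMap.smul_apply, LinearMap.sum_apply,
          LinearMap.comp_apply, LinearMap.flip_apply, LinearMap.add_apply, LinearMap.id_apply,
          map_add, smul_eq_mul, Finset.sum_smul] at h
        calc ∑ x : ι, ∑ y : ι, (g (nw (a x) (a y)) + g (sw (a x) (a y))) • f (b y) • b x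
            = ∑ x : ι, ∑ y : ι, (f (b y) * (g (nw (a x) (a y)) + g (sw (a x) (a y)))) • b x := by
              refine Finset.sum_congr rfl fun x _ => Finset.sum_congr rfl fun y _ => ?_
              module
          _ = -M2 := by
              rw [neg_eq_iff_eq_neg.mp h.symm, hM2, neg_inj, Finset.sum_comm]
      have hA3 : ∑ x : ι, ∑ y : ι, g (a x) • f (ne (b x) (b y)) • a y
          = -M3 := by
        have h := hswap (g.smulRight (∑ y, ((f ∘ₗ ne.flip (b y)).smulRight (a y))))
        simp only [LinearMap.smulRight_apply, LinearMap.smul_apply, LinearMap.sum_apply,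
          LinearMap.comp_apply, LinearMap.flip_apply, Finset.smul_sum] at h
        rw [neg_eq_iff_eq_neg.mp h.symm, hM3, neg_inj]
        refine Finset.sum_congr rfl fun x _ => Finset.sum_congr rfl fun y _ => ?_
        module
      have hB1 : ∑ x : ι, (∑ y : ι, f (b y) * (g (nw (b x) (a y)) + g (sw (b x) (a y)))) • a x
          = M2 := by
        simp only [Finset.sum_smul, hM2]
        rw [Finset.sum_comm]
      have hB2 : ∑ x : ι, (∑ y : ι, g (b y) * f (ne (a y) (b x))) • a x = M3 := by
        simp only [Finset.sum_smul, hM3]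
        rw [Finset.sum_comm]
      have hB3 : ∑ x : ι, g (b x) • ∑ y : ι, f (b y) • sw (a y) (a x)
          + ∑ x : ι, g (b x) • ∑ y : ι, f (b y) • se (a y) (a x) = M1 := by
        rw [hM1]
        simp only [smul_add, Finset.sum_add_distrib, Finset.smul_sum]
        congr 1 <;>
        · rw [Finset.sum_comm]
          refine Finset.sum_congr rfl fun x _ => Finset.sum_congr rfl fun y _ => ?_
          module
      rw [hA1, hA2, hA3, hB1, hB2, hB3]
      abel

  constructor
  · rintro ⟨h1, h2⟩ f g
    constructor
    · have := key1 f g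
      rw [h1] at this
      simp only [map_zero] at this
      exact (sub_eq_zero.mp this.symm).symm
    · have := key2 f g
      rw [h2] at this
      simp only [map_zero] at this
      exact (sub_eq_zero.mp this.symm).symm
  · intro h
    constructor
    · rw [contr_zero_iff]
      intro f g
      rw [key1 f g, (h f g).1, sub_self]
    · rw [contr_zero_iff]
      intro f g
      rw [key2 f g, (h f g).2, sub_self]
end
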